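/- Let ρ̂ : ℝⁿ → ℝ be defined by ρ̂(x) = sup_{a ∈ M} ⟨a, -s(x)⟩ where s(x) is the increasing rearrangement of x and M is a nonempty bounded set of probability vectors a with a₁ ≥ a₂ ≥ … ≥ aₙ ≥ 0 and Σaᵢ = 1. Then ρ̂ is a law-invariant coherent risk estimator: it is permutation invariant, monotone decreasing, cash additive, positively homogeneous, and subadditive. -/

import Mathlib

open Finset Pointwise

/-- `sortVec x` is the nondecreasing rearrangement of `x`. -/
noncomputable def sortVec {n : ℕ} (x : Fin n → ℝ) : Fin n → ℝ := x ∘ Tuple.sort x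

lemma sortVec_monotone {n : ℕ} (x : Fin n → ℝ) : Monotone (sortVec x) :=
  Tuple.monotone_sort x

/-- Rearrangement inequality, negated form: for nonincreasing weights `a`, the value
`∑ a i * (-(sortVec x i))` dominates `∑ a i * (-(x (σ i)))` for every permutation. -/
lemma sum_mul_neg_perm_le {n : ℕ} {a x : Fin n → ℝ}
    (ha : ∀ i j : Fin n, i ≤ j → a j ≤ a i) (σ : Equiv.Perm (Fin n)) :
    ∑ i, a i * (-(x (σ i))) ≤ ∑ i, a i * (-(sortVec x i)) := by
  have hanti : Antivary a (sortVec x) := fun i j hlt =>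
    ha i j ((sortVec_monotone x).reflect_lt hlt).le
  have h := hanti.sum_mul_le_sum_mul_comp_perm (σ := σ.trans (Tuple.sort x)⁻¹)
  have e : ∀ i, sortVec x ((σ.trans (Tuple.sort x)⁻¹) i) = x (σ i) := by
    intro i
    simp [sortVec, Equiv.trans_apply]
  have h2 : ∑ i, a i * sortVec x i ≤ ∑ i, a i * x (σ i) := by
    calc ∑ i, a i * sortVec x i ≤ ∑ i, a i * sortVec x ((σ.trans (Tuple.sort x)⁻¹) i) := h
    _ = ∑ i, a i * x (σ i) := Finset.sum_congr rfl fun i _ => by rw [e i]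
  simp only [mul_neg, Finset.sum_neg_distrib]
  exact neg_le_neg h2

/-- Order statistics are monotone. -/
lemma sortVec_le_sortVec {n : ℕ} {x y : Fin n → ℝ} (h : ∀ i, y i ≤ x i) (i : Fin n) :
    sortVec y i ≤ sortVec x i := by
  set σ := Tuple.sort x with hσ
  set τ := Tuple.sort y with hτ
  have hA : (Finset.image σ (Finset.Iic i)).card = (i : ℕ) + 1 := by
    rw [Finset.card_image_of_injective _ σ.injective, Fin.card_Iic]
  have hB : (Finset.image τ (Finset.Ici i)).card = n - (i : ℕ) := by
    rw [Finset.card_image_of_injective _ τ.injective, Fin.card_Ici]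
  have hinter : ((Finset.image σ (Finset.Iic i)) ∩ (Finset.image τ (Finset.Ici i))).Nonempty := by
    rw [← Finset.card_pos]
    have h1 := Finset.card_union_add_card_inter (Finset.image σ (Finset.Iic i))
      (Finset.image τ (Finset.Ici i))
    have h2 : (Finset.image σ (Finset.Iic i) ∪ Finset.image τ (Finset.Ici i)).card ≤ n := by
      calc (Finset.image σ (Finset.Iic i) ∪ Finset.image τ (Finset.Ici i)).card
          ≤ (Finset.univ : Finset (Fin n)).card := Finset.card_le_card (Finset.subset_univ _)
        _ = n := by simp
    have hi : (i : ℕ) < n := i.isLt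
    omega
  obtain ⟨k, hk⟩ := hinter
  rw [Finset.mem_inter] at hk
  obtain ⟨j₁, hj₁, hj₁k⟩ := Finset.mem_image.mp hk.1
  obtain ⟨j₂, hj₂, hj₂k⟩ := Finset.mem_image.mp hk.2
  rw [Finset.mem_Iic] at hj₁
  rw [Finset.mem_Ici] at hj₂
  calc sortVec y i ≤ sortVec y j₂ := sortVec_monotone y hj₂
    _ = y k := by rw [← hj₂k]; rfl
    _ ≤ x k := h k
    _ = sortVec x j₁ := by rw [← hj₁k]; rfl
    _ ≤ sortVec x i := sortVec_monotone x hj₁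

/-- A convex combination is at most the maximum. -/
lemma sum_mul_le_sup' {n : ℕ} (hn : 1 ≤ n) {a : Fin n → ℝ} (ha0 : ∀ i, 0 ≤ a i)
    (ha1 : ∑ i, a i = 1) (c : Fin n → ℝ) :
    ∑ i, a i * c i ≤ Finset.univ.sup' ⟨⟨0, hn⟩, Finset.mem_univ _⟩ c := by
  set B := Finset.univ.sup' ⟨⟨0, hn⟩, Finset.mem_univ _⟩ c with hB
  calc ∑ i, a i * c i ≤ ∑ i, a i * B := by
        refine Finset.sum_le_sum fun i _ => ?_
        exact mul_le_mul_of_nonneg_left (Finset.le_sup' c (Finset.mem_univ i)) (ha0 i)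
    _ = (∑ i, a i) * B := by rw [Finset.sum_mul]
    _ = B := by rw [ha1, one_mul]

lemma sSup_image_add_const (S : Set ℝ) (hne : S.Nonempty) (hbdd : BddAbove S) (c : ℝ) :
    sSup ((fun t => t + c) '' S) = sSup S + c := by
  refine IsLUB.csSup_eq ?_ (hne.image _)
  constructor
  · rintro t ⟨s, hs, rfl⟩
    exact add_le_add (le_csSup hbdd hs) le_rfl
  · rintro b hb
    have : sSup S ≤ b - c :=
      csSup_le hne fun s hs => le_sub_iff_add_le.mpr (hb ⟨s, hs, rfl⟩)
    linarith

/-- If `ρ̂(x) = sup_{a ∈ M} ⟨a, -s(x)⟩` where `M` is a nonempty set of probability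
vectors with nonincreasing coordinates, then `ρ̂` is a law-invariant coherent risk
estimator: permutation invariant, monotone decreasing, cash additive, positively
homogeneous, and subadditive. -/
theorem law_invariant_CRE_of_sorted_sup_representation {n : ℕ} (hn : 1 ≤ n)
    (M : Set (Fin n → ℝ)) (hMne : M.Nonempty)
    (hM : ∀ a ∈ M, (∀ i j : Fin n, i ≤ j → a j ≤ a i) ∧ (∀ i, 0 ≤ a i) ∧ ∑ i, a i = 1)
    (ρ : (Fin n → ℝ) → ℝ)
    (hρ : ∀ x, ρ x = sSup ((fun a => ∑ i, a i * (-(sortVec x i))) '' M)) :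
    (∀ (x : Fin n → ℝ) (σ : Equiv.Perm (Fin n)), ρ (x ∘ σ) = ρ x) ∧
    (∀ x y : Fin n → ℝ, (∀ i, y i ≤ x i) → ρ x ≤ ρ y) ∧
    (∀ (x : Fin n → ℝ) (m : ℝ), ρ (fun i => x i + m) = ρ x - m) ∧
    (∀ (x : Fin n → ℝ) (l : ℝ), 0 ≤ l → ρ (fun i => l * x i) = l * ρ x) ∧
    (∀ x y : Fin n → ℝ, ρ (x + y) ≤ ρ x + ρ y) := by
  set F : (Fin n → ℝ) → (Fin n → ℝ) → ℝ := fun x a => ∑ i, a i * (-(sortVec x i)) with hF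
  have hSne : ∀ x : Fin n → ℝ, ((F x) '' M).Nonempty := fun x => hMne.image _
  have hSbdd : ∀ x : Fin n → ℝ, BddAbove ((F x) '' M) := by
    intro x
    refine ⟨Finset.univ.sup' ⟨⟨0, hn⟩, Finset.mem_univ _⟩ (fun i => -(sortVec x i)), ?_⟩
    rintro t ⟨a, haM, rfl⟩
    exact sum_mul_le_sup' hn (hM a haM).2.1 (hM a haM).2.2 _
  refine ⟨?_, ?_, ?_, ?_, ?_⟩
  · -- permutation invariance
    intro x σ
    have h : sortVec (x ∘ σ) = sortVec x := Tuple.comp_perm_comp_sort_eq_comp_sort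
    rw [hρ, hρ, h]
  · -- monotonicity
    intro x y hxy
    rw [hρ x, hρ y]
    refine csSup_le (hSne x) ?_
    rintro t ⟨a, haM, rfl⟩
    have h1 : F x a ≤ F y a := by
      refine Finset.sum_le_sum fun i _ => ?_
      exact mul_le_mul_of_nonneg_left (neg_le_neg (sortVec_le_sortVec hxy i)) ((hM a haM).2.1 i)
    exact le_trans h1 (le_csSup (hSbdd y) ⟨a, haM, rfl⟩)
  · -- cash additivity
    intro x m
    have hs : sortVec (fun i => x i + m) = fun i => sortVec x i + m := by
      have h1 : Monotone ((fun i => x i + m) ∘ Tuple.sort (fun i => x i + m)) :=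
        Tuple.monotone_sort _
      have h2 : Monotone ((fun i => x i + m) ∘ Tuple.sort x) := by
        intro i j hij
        exact add_le_add (sortVec_monotone x hij) le_rfl
      exact Tuple.unique_monotone h1 h2
    have himg : (fun a => ∑ i, a i * (-(sortVec (fun i => x i + m) i))) '' M
        = (fun t => t + (-m)) '' ((F x) '' M) := by
      rw [Set.image_image]
      refine Set.image_congr fun a haM => ?_
      rw [hs]
      have : ∀ i, a i * (-(sortVec x i + m)) = a i * (-(sortVec x i)) + (-(a i * m)) := by
        intro i; ring
      rw [Finset.sum_congr rfl fun i _ => this i, Finset.sum_add_distrib,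
        Finset.sum_neg_distrib, ← Finset.sum_mul, (hM a haM).2.2, one_mul]
    rw [hρ, hρ, himg, sSup_image_add_const _ (hSne x) (hSbdd x)]
    ring
  · -- positive homogeneity
    intro x l hl
    have hs : sortVec (fun i => l * x i) = fun i => l * sortVec x i := by
      have h1 : Monotone ((fun i => l * x i) ∘ Tuple.sort (fun i => l * x i)) :=
        Tuple.monotone_sort _
      have h2 : Monotone ((fun i => l * x i) ∘ Tuple.sort x) := by
        intro i j hij
        exact mul_le_mul_of_nonneg_left (sortVec_monotone x hij) hl
      exact Tuple.unique_monotone h1 h2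
    have himg : (fun a => ∑ i, a i * (-(sortVec (fun i => l * x i) i))) '' M
        = (fun t => l * t) '' ((F x) '' M) := by
      rw [Set.image_image]
      refine Set.image_congr fun a haM => ?_
      rw [hs]
      simp only [hF]
      rw [Finset.mul_sum]
      exact Finset.sum_congr rfl fun i _ => by ring
    have hset : (fun t => l * t) '' ((F x) '' M) = l • ((F x) '' M) := by
      rw [← Set.image_smul]
      simp [smul_eq_mul]
    rw [hρ, hρ, himg, hset, Real.sSup_smul_of_nonneg hl, smul_eq_mul]
  · -- subadditivity
    intro x y
    rw [hρ (x + y), hρ x, hρ y]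
    refine csSup_le (hSne (x + y)) ?_
    rintro t ⟨a, haM, rfl⟩
    set σ := Tuple.sort (x + y) with hσdef
    have hsplit : F (x + y) a
        = ∑ i, a i * (-(x (σ i))) + ∑ i, a i * (-(y (σ i))) := by
      rw [← Finset.sum_add_distrib]
      refine Finset.sum_congr rfl fun i _ => ?_
      have : sortVec (x + y) i = x (σ i) + y (σ i) := rfl
      rw [this]; ring
    have hx := sum_mul_neg_perm_le (x := x) (hM a haM).1 σ
    have hy := sum_mul_neg_perm_le (x := y) (hM a haM).1 σ
    have h1 : F x a ≤ sSup ((F x) '' M) := le_csSup (hSbdd x) ⟨a, haM, rfl⟩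
    have h2 : F y a ≤ sSup ((F y) '' M) := le_csSup (hSbdd y) ⟨a, haM, rfl⟩
    calc F (x + y) a ≤ F x a + F y a := by rw [hsplit]; exact add_le_add hx hy
      _ ≤ _ := add_le_add h1 h2
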